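/- Rayleigh lower envelope: for the kernel p(y|x) = (1/(1+x²))exp(−y/(1+x²)) with 0 ≤ x ≤ A, define q(y) = (1/(1+A²))exp(−y/(1+A²)) for 0 ≤ y ≤ y₂ and q(y) = exp(−y) for y > y₂, where y₂ = (1+A²)ln(1+A²)/A². Then q(y) ≤ p(y|x) for all x ∈ [0,A] and all y ≥ 0. -/

import Mathlib

open Real

/-- Rayleigh lower envelope: with `y₂ = (1+A²) ln(1+A²) / A²` and
`q(y) = (1/(1+A²)) exp(-y/(1+A²))` for `y ≤ y₂`, `q(y) = exp(-y)` for `y > y₂`,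
one has `q(y) ≤ (1/(1+x²)) exp(-y/(1+x²))` for all `x ∈ [0,A]` and `y ≥ 0`. -/
theorem stmt13 (A : ℝ) (hA : 0 < A) :
    ∀ x ∈ Set.Icc (0 : ℝ) A, ∀ y : ℝ, 0 ≤ y →
      (if y ≤ (1 + A ^ 2) * Real.log (1 + A ^ 2) / A ^ 2 then
          (1 / (1 + A ^ 2)) * Real.exp (-y / (1 + A ^ 2))
        else Real.exp (-y))
        ≤ (1 / (1 + x ^ 2)) * Real.exp (-y / (1 + x ^ 2)) := by
  intro x hx y hy
  obtain ⟨hx0, hxA⟩ := hx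
  set s : ℝ := 1 + x ^ 2 with hs
  set t : ℝ := 1 + A ^ 2 with ht
  have hs1 : 1 ≤ s := by nlinarith [sq_nonneg x]
  have hst : s ≤ t := by nlinarith [sq_nonneg x, sq_nonneg A]
  have ht1 : 1 < t := by nlinarith
  have hs0 : (0:ℝ) < s := lt_of_lt_of_le one_pos hs1
  have ht0 : (0:ℝ) < t := lt_trans one_pos ht1
  have hlt : 0 < Real.log t := Real.log_pos ht1
  set lam : ℝ := Real.log s / Real.log t with hlam
  have hls : 0 ≤ Real.log s := Real.log_nonneg hs1
  have hlam0 : 0 ≤ lam := div_nonneg hls hlt.le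
  have hlam1 : lam ≤ 1 := by
    rw [hlam, div_le_one hlt]
    exact Real.log_le_log hs0 hst
  have hv : Real.log s = lam * Real.log t := by
    rw [hlam, div_mul_cancel₀ _ hlt.ne']
  -- convexity of exp
  have hexp : Real.exp (-Real.log s) ≤ (1 - lam) * 1 + lam * Real.exp (-Real.log t) := by
    have h := convexOn_exp.2 (Set.mem_univ (0:ℝ)) (Set.mem_univ (-Real.log t))
      (by linarith : (0:ℝ) ≤ 1 - lam) hlam0 (by ring)
    have harg : (1 - lam) • (0:ℝ) + lam • (-Real.log t) = -Real.log s := by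
      rw [smul_eq_mul, smul_eq_mul, hv]; ring
    rw [harg] at h
    simpa [Real.exp_zero, smul_eq_mul] using h
  have hes : Real.exp (-Real.log s) = 1 / s := by
    rw [Real.exp_neg, Real.exp_log hs0, one_div]
  have het : Real.exp (-Real.log t) = 1 / t := by
    rw [Real.exp_neg, Real.exp_log ht0, one_div]
  rw [hes, het] at hexp
  -- key: log s + y/s ≤ max y (log t + y/t)
  have hmax : Real.log s + y / s ≤ max y (Real.log t + y / t) := by
    have h1 : Real.log s + y / s ≤ (1 - lam) * y + lam * (Real.log t + y / t) := by
      have h2 : y / s = y * (1 / s) := by ring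
      have h3 : y * (1 / s) ≤ y * ((1 - lam) * 1 + lam * (1 / t)) :=
        mul_le_mul_of_nonneg_left hexp hy
      rw [h2]
      calc Real.log s + y * (1 / s)
          ≤ lam * Real.log t + y * ((1 - lam) * 1 + lam * (1 / t)) := by
            rw [hv]; linarith
        _ = (1 - lam) * y + lam * (Real.log t + y / t) := by ring
    rcases le_total y (Real.log t + y / t) with h | h
    · refine h1.trans (le_trans ?_ (le_max_right _ _))
      nlinarith
    · refine h1.trans (le_trans ?_ (le_max_left _ _))
      nlinarith
  -- RHS equals exp(-(log s + y/s))
  have hrhs : (1 / s) * Real.exp (-y / s) = Real.exp (-(Real.log s + y / s)) := by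
    rw [← hes, ← Real.exp_add]; ring_nf
  rw [hrhs]
  have hA2 : t - 1 = A ^ 2 := by rw [ht]; ring
  split_ifs with hcase
  · -- y ≤ t log t / A², so y ≤ log t + y/t, max is log t + y/t
    have hy2 : y * A ^ 2 ≤ t * Real.log t := by
      rw [le_div_iff₀ (pow_pos hA 2)] at hcase; exact hcase
    have hyle : y ≤ Real.log t + y / t := by
      rw [← hA2] at hy2
      have hd : y / t * t = y := div_mul_cancel₀ y ht0.ne'
      nlinarith [hd]
    have hmax' : max y (Real.log t + y / t) = Real.log t + y / t := max_eq_right hyle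
    rw [hmax'] at hmax
    have hlhs : (1 / t) * Real.exp (-y / t) = Real.exp (-(Real.log t + y / t)) := by
      rw [← het, ← Real.exp_add]; ring_nf
    rw [hlhs]
    exact Real.exp_le_exp.mpr (by linarith)
  · -- y > y₂ : log t + y/t ≤ y
    push_neg at hcase
    have hy2 : t * Real.log t ≤ y * A ^ 2 :=
      ((div_lt_iff₀ (pow_pos hA 2)).mp hcase).le
    have hyle : Real.log t + y / t ≤ y := by
      rw [← hA2] at hy2
      have hd : y / t * t = y := div_mul_cancel₀ y ht0.ne'
      nlinarith [hd]
    have hmax' : max y (Real.log t + y / t) = y := max_eq_left hyle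
    rw [hmax'] at hmax
    exact Real.exp_le_exp.mpr (by linarith)
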